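/- In the difference-in-differences setting, the event-study coefficient β̂_t = τ̂_t − τ̂_0 (where τ̂_t is the SDIM for period-t outcomes) has expectation E[β̂_t] = τ_t + (N/N₀)(N/N₁)·Cov₁(π_i, Y_{it}(0) − Y_{i0}(0)), where τ_t = (1/N₁)Σ_i π_i(Y_{it}(1) − Y_{it}(0)), assuming no anticipation Y_{i0}(1) = Y_{i0}(0) for all i. -/

import Mathlib

open MeasureTheory Finset

/-- Expectation of the event-study (DiD) coefficient β̂_t = τ̂_t − τ̂_0
under Poisson rejective assignment, with no anticipation. -/
theorem did_expectation {Ω : Type*} [MeasurableSpace Ω] (μ : Measure Ω)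
    [IsProbabilityMeasure μ]
    (N N1 N0 : ℕ) (hN1 : 0 < N1) (hN0 : 0 < N0) (hN : N1 + N0 = N)
    (Y0t Y1t Y00 Y10 π : Fin N → ℝ) (D : Fin N → Ω → ℝ)
    (hD01 : ∀ i ω, D i ω = 0 ∨ D i ω = 1)
    (hint : ∀ i, Integrable (D i) μ)
    (hE : ∀ i, ∫ ω, D i ω ∂μ = π i)
    (hsum : ∀ᵐ ω ∂μ, ∑ i, D i ω = (N1 : ℝ))
    (hnoanticip : ∀ i, Y10 i = Y00 i) :
    (∫ ω, (((1 / (N1 : ℝ)) * ∑ i, D i ω * (D i ω * Y1t i + (1 - D i ω) * Y0t i)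
          - (1 / (N0 : ℝ)) * ∑ i, (1 - D i ω) * (D i ω * Y1t i + (1 - D i ω) * Y0t i))
        - ((1 / (N1 : ℝ)) * ∑ i, D i ω * (D i ω * Y10 i + (1 - D i ω) * Y00 i)
          - (1 / (N0 : ℝ)) * ∑ i, (1 - D i ω) * (D i ω * Y10 i + (1 - D i ω) * Y00 i))) ∂μ)
      = (1 / (N1 : ℝ)) * ∑ i, π i * (Y1t i - Y0t i)
        + ((N : ℝ) / (N0 : ℝ)) * ((N : ℝ) / (N1 : ℝ))
          * ((1 / (N : ℝ)) * ∑ i, (π i - (N1 : ℝ) / (N : ℝ))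
              * ((Y0t i - Y00 i) - (1 / (N : ℝ)) * ∑ j, (Y0t j - Y00 j))) := by
  have hNpos : 0 < N := hN ▸ Nat.add_pos_left hN1 _
  have hNr : (N1 : ℝ) + (N0 : ℝ) = (N : ℝ) := by exact_mod_cast congrArg Nat.cast hN
  have hN1r : (N1 : ℝ) ≠ 0 := Nat.cast_ne_zero.mpr hN1.ne'
  have hN0r : (N0 : ℝ) ≠ 0 := Nat.cast_ne_zero.mpr hN0.ne'
  have hNrne : (N : ℝ) ≠ 0 := Nat.cast_ne_zero.mpr hNpos.ne'
  -- sum of π equals N1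
  have hsumπ : ∑ i, π i = (N1 : ℝ) := by
    have h1 : ∫ ω, (∑ i, D i ω) ∂μ = ∑ i, π i := by
      rw [integral_finset_sum _ (fun i _ => hint i)]
      simp [hE]
    have h2 : ∫ ω, (∑ i, D i ω) ∂μ = (N1 : ℝ) := by
      rw [integral_congr_ae hsum]
      simp
    rw [← h1, h2]
  -- abbreviations
  set c : Fin N → ℝ := fun i =>
    (Y1t i - Y00 i) / (N1 : ℝ) + (Y0t i - Y00 i) / (N0 : ℝ) with hc
  set K : ℝ := -(1 / (N0 : ℝ)) * ∑ i, (Y0t i - Y00 i) with hK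
  -- pointwise identity
  have hpt : ∀ ω,
      (((1 / (N1 : ℝ)) * ∑ i, D i ω * (D i ω * Y1t i + (1 - D i ω) * Y0t i)
          - (1 / (N0 : ℝ)) * ∑ i, (1 - D i ω) * (D i ω * Y1t i + (1 - D i ω) * Y0t i))
        - ((1 / (N1 : ℝ)) * ∑ i, D i ω * (D i ω * Y10 i + (1 - D i ω) * Y00 i)
          - (1 / (N0 : ℝ)) * ∑ i, (1 - D i ω) * (D i ω * Y10 i + (1 - D i ω) * Y00 i)))
      = (∑ i, D i ω * c i) + K := by
    intro ω
    have e1 : ∀ i, D i ω * (D i ω * Y1t i + (1 - D i ω) * Y0t i) = D i ω * Y1t i := by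
      intro i; rcases hD01 i ω with h | h <;> simp [h]
    have e2 : ∀ i, (1 - D i ω) * (D i ω * Y1t i + (1 - D i ω) * Y0t i)
        = Y0t i - D i ω * Y0t i := by
      intro i; rcases hD01 i ω with h | h <;> simp [h]
    have e3 : ∀ i, D i ω * (D i ω * Y10 i + (1 - D i ω) * Y00 i) = D i ω * Y00 i := by
      intro i; rw [hnoanticip i]; rcases hD01 i ω with h | h <;> simp [h]
    have e4 : ∀ i, (1 - D i ω) * (D i ω * Y10 i + (1 - D i ω) * Y00 i)
        = Y00 i - D i ω * Y00 i := by
      intro i; rw [hnoanticip i]; rcases hD01 i ω with h | h <;> simp [h]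
    have hKsum : K = ∑ i, (-(1 / (N0 : ℝ)) * (Y0t i - Y00 i)) := by
      rw [hK, Finset.mul_sum]
    simp only [e1, e2, e3, e4, hKsum, Finset.mul_sum, ← Finset.sum_sub_distrib,
      ← Finset.sum_add_distrib]
    refine Finset.sum_congr rfl fun i _ => ?_
    simp only [hc]
    field_simp
    ring
  -- compute the integral
  have hint1 : Integrable (fun ω => ∑ i, D i ω * c i) μ :=
    integrable_finset_sum _ (fun i _ => (hint i).mul_const _)
  have hI : (∫ ω, (((1 / (N1 : ℝ)) * ∑ i, D i ω * (D i ω * Y1t i + (1 - D i ω) * Y0t i)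
          - (1 / (N0 : ℝ)) * ∑ i, (1 - D i ω) * (D i ω * Y1t i + (1 - D i ω) * Y0t i))
        - ((1 / (N1 : ℝ)) * ∑ i, D i ω * (D i ω * Y10 i + (1 - D i ω) * Y00 i)
          - (1 / (N0 : ℝ)) * ∑ i, (1 - D i ω) * (D i ω * Y10 i + (1 - D i ω) * Y00 i))) ∂μ)
      = (∑ i, π i * c i) + K := by
    simp only [hpt]
    rw [integral_add hint1 (integrable_const K), integral_const,
      integral_finset_sum _ (fun i _ => (hint i).mul_const _)]
    simp only [integral_mul_const, hE, measure_univ, ENNReal.toReal_one, probReal_univ, one_smul]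
  rw [hI]
  -- final algebra
  have hexp : ∑ i, (π i - (N1 : ℝ) / (N : ℝ))
      * ((Y0t i - Y00 i) - (1 / (N : ℝ)) * ∑ j, (Y0t j - Y00 j))
      = (∑ i, π i * (Y0t i - Y00 i))
        - ((N1 : ℝ) / (N : ℝ)) * ∑ i, (Y0t i - Y00 i) := by
    simp only [sub_mul, mul_sub, Finset.sum_sub_distrib, ← Finset.sum_mul,
      ← Finset.mul_sum, hsumπ, Finset.sum_const, card_univ, Fintype.card_fin,
      nsmul_eq_mul]
    field_simp
    ring
  have hsplit : ∑ i, π i * c i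
      = (1 / (N1 : ℝ)) * ∑ i, π i * (Y1t i - Y0t i)
        + (1 / (N1 : ℝ)) * ∑ i, π i * (Y0t i - Y00 i)
        + (1 / (N0 : ℝ)) * ∑ i, π i * (Y0t i - Y00 i) := by
    simp only [Finset.mul_sum, ← Finset.sum_add_distrib]
    refine Finset.sum_congr rfl fun i _ => ?_
    simp only [hc]
    field_simp
    ring
  rw [hexp, hsplit, hK]
  rw [← hNr]
  field_simp
  ring
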